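/- There exists a homeomorphism η : Σ_{2,0} → Σ_{≥0} such that O_0 ∘ η = η ∘ O, where O is the dyadic odometer restricted to Σ_{2,0}. That is, the 0-odometer on the Baire-type space Σ_{≥0} is topologically conjugate to the dyadic odometer restricted to the set of binary sequences not ending in a tail of ones. -/
import Mathlib


open Filter
open scoped Classical

/-- The dyadic odometer on `Σ₂ = {0,1}^ℕ` (with `true = 1`, `false = 0`):
addition of `(1,0,0,…)` with carry over, and the all-ones sequence is sent
to the all-zeroes sequence. -/
noncomputable def dyadicOdometer (w : ℕ → Bool) : ℕ → Bool :=
  if h : ∃ k, w k = false then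
    fun i => if i < Nat.find h then false else if i = Nat.find h then true else w i
  else fun _ => false

/-- The `0`-odometer on the Baire-type space `ℕ₀^ℕ`:
`O₀(w₁,w₂,w₃,…) = (0,…,0 (w₁ times), w₂+1, w₃, …)`. -/
def baireOdometer (w : ℕ → ℕ) : ℕ → ℕ := fun i =>
  if i < w 0 then 0
  else if i = w 0 then w 1 + 1
  else w (i - w 0 + 1)

/-- `Σ_{2,0}`: binary sequences which are not eventually constantly `1`. -/
def Sigma20 : Set (ℕ → Bool) := {w | ¬ ∀ᶠ i in atTop, w i = true}

namespace OdomAux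

/-- position of the `n`-th `false` in `w` -/
noncomputable def zpos (w : ℕ → Bool) (n : ℕ) : ℕ := Nat.nth (fun i => w i = false) n

/-- gaps between consecutive `false`s -/
noncomputable def toB (w : ℕ → Bool) : ℕ → ℕ
  | 0 => zpos w 0
  | n + 1 => zpos w (n + 1) - zpos w n - 1

/-- positions of `false`s determined by a gap sequence -/
def ppos (a : ℕ → ℕ) (n : ℕ) : ℕ := (∑ j ∈ Finset.range (n + 1), a j) + n

noncomputable def ofB (a : ℕ → ℕ) (i : ℕ) : Bool := decide (∀ n ≤ i, ppos a n ≠ i)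

lemma ppos_zero (a : ℕ → ℕ) : ppos a 0 = a 0 := by simp [ppos]

lemma ppos_succ (a : ℕ → ℕ) (n : ℕ) : ppos a (n + 1) = ppos a n + a (n + 1) + 1 := by
  simp [ppos, Finset.sum_range_succ]; ring

lemma ppos_strictMono (a : ℕ → ℕ) : StrictMono (ppos a) :=
  strictMono_nat_of_lt_succ fun n => by rw [ppos_succ]; omega

lemma le_ppos (a : ℕ → ℕ) (n : ℕ) : n ≤ ppos a n := Nat.le_add_left n _

lemma ofB_eq_false_iff {a : ℕ → ℕ} {i : ℕ} : ofB a i = false ↔ ∃ n, ppos a n = i := by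
  simp only [ofB, decide_eq_false_iff_not]
  push_neg
  constructor
  · rintro ⟨n, _, h⟩; exact ⟨n, h⟩
  · rintro ⟨n, h⟩; exact ⟨n, h ▸ le_ppos a n, h⟩

lemma ofB_infinite (a : ℕ → ℕ) : {i | ofB a i = false}.Infinite :=
  Set.infinite_of_injective_forall_mem (ppos_strictMono a).injective
    (fun n => ofB_eq_false_iff.2 ⟨n, rfl⟩)

lemma mem_sigma20_iff {w : ℕ → Bool} : w ∈ Sigma20 ↔ {i | w i = false}.Infinite := by
  rw [Sigma20, Set.mem_setOf_eq, not_eventually, ← Nat.frequently_atTop_iff_infinite]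
  simp [Bool.not_eq_true]

lemma zpos_ofB (a : ℕ → ℕ) (n : ℕ) : zpos (ofB a) n = ppos a n := by
  have hmem : ofB a (ppos a n) = false := ofB_eq_false_iff.2 ⟨n, rfl⟩
  have hcount : Nat.count (fun i => ofB a i = false) (ppos a n) = n := by
    rw [Nat.count_eq_card_filter_range]
    have : Finset.filter (fun i => ofB a i = false) (Finset.range (ppos a n)) =
        Finset.image (ppos a) (Finset.range n) := by
      ext j
      simp only [Finset.mem_filter, Finset.mem_range, Finset.mem_image, ofB_eq_false_iff]
      constructor
      · rintro ⟨hj, m, rfl⟩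
        exact ⟨m, (ppos_strictMono a).lt_iff_lt.mp hj, rfl⟩
      · rintro ⟨m, hm, rfl⟩
        exact ⟨(ppos_strictMono a).lt_iff_lt.mpr hm, m, rfl⟩
    rw [this, Finset.card_image_of_injective _ (ppos_strictMono a).injective,
      Finset.card_range]
  have := Nat.nth_count (p := fun i => ofB a i = false) hmem
  rw [hcount] at this
  exact this

lemma zpos_false {w : ℕ → Bool} (hw : {i | w i = false}.Infinite) (n : ℕ) :
    w (zpos w n) = false := Nat.nth_mem_of_infinite hw n

lemma zpos_lt {w : ℕ → Bool} (hw : {i | w i = false}.Infinite) (n : ℕ) :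
    zpos w n < zpos w (n + 1) := (Nat.nth_lt_nth hw).2 (Nat.lt_succ_self n)

lemma ppos_toB {w : ℕ → Bool} (hw : {i | w i = false}.Infinite) (n : ℕ) :
    ppos (toB w) n = zpos w n := by
  induction n with
  | zero => rw [ppos_zero]; rfl
  | succ n ih =>
    rw [ppos_succ, ih]
    have := zpos_lt hw n
    show zpos w n + (zpos w (n + 1) - zpos w n - 1) + 1 = zpos w (n + 1)
    omega

lemma toB_ofB (a : ℕ → ℕ) : toB (ofB a) = a := by
  funext n
  cases n with
  | zero => show zpos (ofB a) 0 = a 0; rw [zpos_ofB, ppos_zero]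
  | succ n =>
    show zpos (ofB a) (n + 1) - zpos (ofB a) n - 1 = a (n + 1)
    rw [zpos_ofB, zpos_ofB, ppos_succ]
    omega

lemma ofB_toB {w : ℕ → Bool} (hw : {i | w i = false}.Infinite) : ofB (toB w) = w := by
  funext i
  have h1 : ofB (toB w) i = false ↔ w i = false := by
    rw [ofB_eq_false_iff]
    constructor
    · rintro ⟨n, hn⟩
      rw [ppos_toB hw] at hn
      rw [← hn]; exact zpos_false hw n
    · intro h
      exact ⟨Nat.count (fun i => w i = false) i, by
        rw [ppos_toB hw]; exact Nat.nth_count (p := fun i => w i = false) h⟩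
  cases hb : ofB (toB w) i with
  | false => rw [h1.1 hb]
  | true =>
    cases hb2 : w i with
    | false => rw [← h1.2 hb2, hb]
    | true => rfl

lemma find_ofB (a : ℕ → ℕ) (h : ∃ k, ofB a k = false) : Nat.find h = a 0 := by
  rw [Nat.find_eq_iff]
  constructor
  · exact ofB_eq_false_iff.2 ⟨0, ppos_zero a⟩
  · intro m hm hc
    obtain ⟨n, hn⟩ := ofB_eq_false_iff.1 hc
    have h0 : ppos a 0 ≤ ppos a n := (ppos_strictMono a).monotone (Nat.zero_le n)
    rw [ppos_zero] at h0
    omega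

lemma ppos_baire (a : ℕ → ℕ) (n : ℕ) :
    ppos (baireOdometer a) n = if n < a 0 then n else ppos a (n - a 0 + 1) := by
  induction n with
  | zero =>
    by_cases h : 0 < a 0
    · rw [if_pos h, ppos_zero, baireOdometer]
      simp [h]
    · have ha : a 0 = 0 := by omega
      rw [if_neg h, ppos_zero]
      have hb : baireOdometer a 0 = a 1 + 1 := by
        simp only [baireOdometer, if_neg (by omega : ¬ 0 < a 0), if_pos ha.symm]
      have hp1 : ppos a 1 = a 0 + a 1 + 1 := by
        have := ppos_succ a 0
        rw [ppos_zero] at this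
        simpa using this
      rw [hb, show 0 - a 0 + 1 = 1 by omega, hp1]
      omega
  | succ n ih =>
    rw [ppos_succ, ih]
    rcases lt_trichotomy (n + 1) (a 0) with h | h | h
    · have hb : baireOdometer a (n + 1) = 0 := by
        simp only [baireOdometer, if_pos h]
      rw [if_pos (by omega : n < a 0), if_pos h, hb]
    · have hb : baireOdometer a (n + 1) = a 1 + 1 := by
        simp only [baireOdometer, if_neg (by omega : ¬ n + 1 < a 0), if_pos h]
      have hp1 : ppos a 1 = a 0 + a 1 + 1 := by
        have := ppos_succ a 0
        rw [ppos_zero] at this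
        simpa using this
      rw [if_pos (by omega : n < a 0), if_neg (by omega : ¬ n + 1 < a 0), hb,
        show n + 1 - a 0 + 1 = 1 by omega, hp1]
      omega
    · have hb : baireOdometer a (n + 1) = a (n + 1 - a 0 + 1) := by
        simp only [baireOdometer, if_neg (by omega : ¬ n + 1 < a 0),
          if_neg (by omega : ¬ n + 1 = a 0)]
      rw [if_neg (by omega : ¬ n < a 0), if_neg (by omega : ¬ n + 1 < a 0), hb,
        show n + 1 - a 0 + 1 = (n - a 0 + 1) + 1 by omega,
        ppos_succ a (n - a 0 + 1)]

lemma bool_eq_of_false_iff {b₁ b₂ : Bool} (h : b₁ = false ↔ b₂ = false) : b₁ = b₂ := by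
  cases b₁ <;> cases b₂ <;> simp_all

lemma ofB_baire (a : ℕ → ℕ) : ofB (baireOdometer a) = dyadicOdometer (ofB a) := by
  have h : ∃ k, ofB a k = false := ⟨a 0, ofB_eq_false_iff.2 ⟨0, ppos_zero a⟩⟩
  funext i
  rw [dyadicOdometer, dif_pos h, find_ofB a h]
  by_cases h1 : i < a 0
  · rw [if_pos h1]
    exact ofB_eq_false_iff.2 ⟨i, by rw [ppos_baire, if_pos h1]⟩
  by_cases h2 : i = a 0
  · rw [if_neg h1, if_pos h2]
    cases hb : ofB (baireOdometer a) i with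
    | true => rfl
    | false =>
      exfalso
      obtain ⟨n, hn⟩ := ofB_eq_false_iff.1 hb
      rw [ppos_baire] at hn
      by_cases hna : n < a 0
      · rw [if_pos hna] at hn; omega
      · rw [if_neg hna] at hn
        have h0 : ppos a 0 < ppos a (n - a 0 + 1) := ppos_strictMono a (by omega)
        rw [ppos_zero] at h0
        omega
  · rw [if_neg h1, if_neg h2]
    apply bool_eq_of_false_iff
    rw [ofB_eq_false_iff, ofB_eq_false_iff]
    constructor
    · rintro ⟨n, hn⟩
      rw [ppos_baire] at hn
      by_cases hna : n < a 0
      · rw [if_pos hna] at hn; omega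
      · rw [if_neg hna] at hn; exact ⟨n - a 0 + 1, hn⟩
    · rintro ⟨n, hn⟩
      cases n with
      | zero => rw [ppos_zero] at hn; omega
      | succ m =>
        refine ⟨a 0 + m, ?_⟩
        rw [ppos_baire, if_neg (by omega)]
        have : a 0 + m - a 0 + 1 = m + 1 := by omega
        rw [this]; exact hn

lemma ppos_congr {a a' : ℕ → ℕ} {n : ℕ} (h : ∀ j ≤ n, a j = a' j) : ppos a n = ppos a' n := by
  unfold ppos
  congr 1
  refine Finset.sum_congr rfl fun j hj => h j (by
    have := Finset.mem_range.mp hj; omega)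

lemma ofB_congr {a a' : ℕ → ℕ} {i : ℕ} (h : ∀ j ≤ i, a j = a' j) : ofB a i = ofB a' i := by
  unfold ofB
  refine decide_eq_decide.mpr ?_
  constructor
  · intro H n hn
    rw [← ppos_congr (fun j hj => h j (le_trans hj hn))]
    exact H n hn
  · intro H n hn
    rw [ppos_congr (fun j hj => h j (le_trans hj hn))]
    exact H n hn

lemma zpos_congr {w w' : ℕ → Bool} (hw : {i | w i = false}.Infinite) {n : ℕ}
    (h : ∀ j ≤ zpos w n, w' j = w j) : zpos w' n = zpos w n := by
  have hmem : w' (zpos w n) = false := (h _ le_rfl).trans (zpos_false hw n)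
  have hcount : Nat.count (fun i => w' i = false) (zpos w n) =
      Nat.count (fun i => w i = false) (zpos w n) := by
    rw [Nat.count_eq_card_filter_range, Nat.count_eq_card_filter_range]
    congr 1
    refine Finset.filter_congr fun j hj => ?_
    rw [h j (le_of_lt (Finset.mem_range.mp hj))]
  have hc : Nat.count (fun i => w i = false) (zpos w n) = n :=
    Nat.count_nth_of_infinite hw n
  have := Nat.nth_count (p := fun i => w' i = false) hmem
  rw [hcount, hc] at this
  exact this

lemma zpos_mono {w : ℕ → Bool} (hw : {i | w i = false}.Infinite) {m n : ℕ} (h : m ≤ n) :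
    zpos w m ≤ zpos w n := (Nat.nth_le_nth hw).2 h

lemma toB_congr {w w' : ℕ → Bool} (hw : {i | w i = false}.Infinite) {n : ℕ}
    (h : ∀ j ≤ zpos w n, w' j = w j) : toB w' n = toB w n := by
  cases n with
  | zero => show zpos w' 0 = zpos w 0; exact zpos_congr hw h
  | succ m =>
    have h1 : zpos w' (m + 1) = zpos w (m + 1) := zpos_congr hw h
    have h2 : zpos w' m = zpos w m :=
      zpos_congr hw fun j hj => h j (le_trans hj (zpos_mono hw (Nat.le_succ m)))
    show zpos w' (m + 1) - zpos w' m - 1 = zpos w (m + 1) - zpos w m - 1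
    rw [h1, h2]

lemma continuous_toB : Continuous (fun w : Sigma20 => toB (w : ℕ → Bool)) := by
  apply continuous_pi
  intro n
  rw [continuous_iff_continuousAt]
  intro w₀
  have hw₀ : {i | (w₀ : ℕ → Bool) i = false}.Infinite := mem_sigma20_iff.1 w₀.2
  have hev : ∀ᶠ w : Sigma20 in nhds w₀,
      ∀ j ∈ Set.Iic (zpos (w₀ : ℕ → Bool) n), (w : ℕ → Bool) j = (w₀ : ℕ → Bool) j := by
    rw [eventually_all_finite (Set.finite_Iic _)]
    intro j _
    have hc : Continuous fun w : Sigma20 => (w : ℕ → Bool) j :=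
      (continuous_apply j).comp continuous_subtype_val
    have hmem : {b : Bool | b = (w₀ : ℕ → Bool) j} ∈ nhds ((w₀ : ℕ → Bool) j) :=
      IsOpen.mem_nhds (isOpen_discrete _) rfl
    exact hc.continuousAt hmem
  exact Filter.EventuallyEq.continuousAt
    (hev.mono fun w hw => toB_congr hw₀ fun j hj => hw j hj)

lemma continuous_ofB :
    Continuous (fun a : ℕ → ℕ =>
      (⟨ofB a, mem_sigma20_iff.2 (ofB_infinite a)⟩ : Sigma20)) := by
  apply Continuous.subtype_mk
  apply continuous_pi
  intro i
  have key : (fun a : ℕ → ℕ => ofB a i) =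
      (fun v : Fin (i + 1) → ℕ =>
        ofB (fun j => if h : j < i + 1 then v ⟨j, h⟩ else 0) i) ∘
      (fun a (j : Fin (i + 1)) => a (j : ℕ)) := by
    funext a
    exact ofB_congr fun j hj => by rw [dif_pos (Nat.lt_succ_of_le hj)]
  rw [key]
  exact continuous_of_discreteTopology.comp (continuous_pi fun j => continuous_apply _)

noncomputable def eta : Sigma20 ≃ₜ (ℕ → ℕ) where
  toFun := fun w => toB (w : ℕ → Bool)
  invFun := fun a => ⟨ofB a, mem_sigma20_iff.2 (ofB_infinite a)⟩
  left_inv := fun w => Subtype.ext (ofB_toB (mem_sigma20_iff.1 w.2))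
  right_inv := fun a => toB_ofB a
  continuous_toFun := continuous_toB
  continuous_invFun := continuous_ofB

end OdomAux

/-- The `0`-odometer on `ℕ₀^ℕ` is topologically conjugate, via a homeomorphism `η`,
to the dyadic odometer restricted to `Σ_{2,0}`. -/
theorem dyadic_odometer_conjugate_baire_odometer :
    ∃ η : Sigma20 ≃ₜ (ℕ → ℕ),
      ∀ w : Sigma20, ∃ hw : dyadicOdometer (w : ℕ → Bool) ∈ Sigma20,
        baireOdometer (η w) = η ⟨dyadicOdometer (w : ℕ → Bool), hw⟩ := by
  refine ⟨OdomAux.eta, fun w => ?_⟩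
  have hw₀ : {i | (w : ℕ → Bool) i = false}.Infinite := OdomAux.mem_sigma20_iff.1 w.2
  have key : dyadicOdometer (w : ℕ → Bool) =
      OdomAux.ofB (baireOdometer (OdomAux.toB (w : ℕ → Bool))) := by
    rw [OdomAux.ofB_baire, OdomAux.ofB_toB hw₀]
  have hw : dyadicOdometer (w : ℕ → Bool) ∈ Sigma20 := by
    rw [key]
    exact OdomAux.mem_sigma20_iff.2 (OdomAux.ofB_infinite _)
  refine ⟨hw, ?_⟩
  show baireOdometer (OdomAux.toB (w : ℕ → Bool)) =
    OdomAux.toB (dyadicOdometer (w : ℕ → Bool))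
  rw [key, OdomAux.toB_ofB]
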